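/- Let x ∈ (0,π] and let k ∈ L^∞([0,π]²;ℝ). Suppose the operator Id − κ_x is invertible on L²([0,x]) with ‖(Id−κ_x)^{−1}‖_{L²→L²} = R < ∞. Then for every p ∈ [2,∞] and every f ∈ L^p([0,x]), the unique L²-solution u of u − κ_x u = f belongs to L^p([0,x]) and satisfies ‖u‖_{L^p([0,x])} ≤ ‖f‖_{L^p([0,x])} + π^{1/2+1/p}‖k‖_{L^∞} R ‖f‖_{L²([0,x])}. In particular, Id − κ_x is boundedly invertible from L^p([0,x]) to L^p([0,x]). -/

import Mathlib

open MeasureTheory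
open scoped ENNReal

/-- Regularity of solutions of the Fredholm equation `u − κ_x u = f`:
if `Id − κ_x` is invertible on `L²([0,x])` with inverse of norm (at most) `R`
and the kernel `k` is bounded by `Ck`, then for `p ∈ [2,∞]` and `f ∈ Lᵖ([0,x])`
the `L²`-solution `u` lies in `Lᵖ` with
`‖u‖_p ≤ ‖f‖_p + π^{1/2+1/p}‖k‖_∞ R ‖f‖_2`. -/
theorem stmt3 (x : ℝ) (hx : x ∈ Set.Ioc (0 : ℝ) Real.pi)
    (k : ℝ → ℝ → ℝ) (hkmeas : Measurable (Function.uncurry k))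
    (Ck : ℝ) (hCk : 0 ≤ Ck) (hkbdd : ∀ t s : ℝ, |k t s| ≤ Ck)
    (R : ℝ) (hR : 0 ≤ R)
    -- `Id − κ_x` is surjective on `L²([0,x])` ...
    (hsolve : ∀ f : ℝ → ℝ, MemLp f 2 (volume.restrict (Set.Icc (0 : ℝ) x)) →
      ∃ u : ℝ → ℝ, MemLp u 2 (volume.restrict (Set.Icc (0 : ℝ) x)) ∧
        ∀ᵐ t ∂(volume.restrict (Set.Icc (0 : ℝ) x)),
          u t - ∫ s in Set.Icc (0 : ℝ) x, k t s * u s = f t)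
    -- ... and injective, with inverse of operator norm at most `R`
    (hbound : ∀ v : ℝ → ℝ, MemLp v 2 (volume.restrict (Set.Icc (0 : ℝ) x)) →
      eLpNorm v 2 (volume.restrict (Set.Icc (0 : ℝ) x)) ≤
        ENNReal.ofReal R *
          eLpNorm (fun t => v t - ∫ s in Set.Icc (0 : ℝ) x, k t s * v s) 2
            (volume.restrict (Set.Icc (0 : ℝ) x)))
    (p : ℝ≥0∞) (hp : 2 ≤ p)
    (f u : ℝ → ℝ)
    (hf : MemLp f p (volume.restrict (Set.Icc (0 : ℝ) x)))
    (hu : MemLp u 2 (volume.restrict (Set.Icc (0 : ℝ) x)))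
    (heq : ∀ᵐ t ∂(volume.restrict (Set.Icc (0 : ℝ) x)),
      u t - ∫ s in Set.Icc (0 : ℝ) x, k t s * u s = f t) :
    MemLp u p (volume.restrict (Set.Icc (0 : ℝ) x)) ∧
      eLpNorm u p (volume.restrict (Set.Icc (0 : ℝ) x)) ≤
        eLpNorm f p (volume.restrict (Set.Icc (0 : ℝ) x)) +
          ENNReal.ofReal (Real.pi ^ ((1 : ℝ) / 2 + 1 / p.toReal) * Ck * R) *
            eLpNorm f 2 (volume.restrict (Set.Icc (0 : ℝ) x)) := by
  set μ := volume.restrict (Set.Icc (0 : ℝ) x) with hμdef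
  have hμuniv : μ Set.univ = ENNReal.ofReal x := by
    simp [hμdef, Real.volume_Icc]
  haveI : IsFiniteMeasure μ := ⟨by rw [hμuniv]; exact ENNReal.ofReal_lt_top⟩
  -- the integral operator applied to u
  set g : ℝ → ℝ := fun t => ∫ s in Set.Icc (0 : ℝ) x, k t s * u s with hgdef
  -- measurability of g
  obtain ⟨u', hu'sm, huu'⟩ := hu.1
  have hg_eq : g = fun t => ∫ s, k t s * u' s ∂μ := by
    funext t
    exact integral_congr_ae (huu'.mono fun s hs => by dsimp only; rw [hs])
  have hgsm : StronglyMeasurable g := by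
    rw [hg_eq]
    exact (hkmeas.mul (hu'sm.measurable.comp measurable_snd)).stronglyMeasurable.integral_prod_right'
  -- u integrable
  have huint : Integrable u μ := memLp_one_iff_integrable.mp
    (hu.mono_exponent (by norm_num))
  -- pointwise bound on g
  set M : ℝ := Ck * ∫ s, ‖u s‖ ∂μ with hMdef
  have hM0 : 0 ≤ M := mul_nonneg hCk (integral_nonneg fun s => norm_nonneg _)
  have hgbdd : ∀ t, ‖g t‖ ≤ M := by
    intro t
    have hmeas : AEStronglyMeasurable (fun s => k t s * u s) μ :=
      (hkmeas.of_uncurry_left.aestronglyMeasurable).mul hu.1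
    have hi : Integrable (fun s => k t s * u s) μ := by
      refine Integrable.mono' (huint.norm.const_mul Ck) hmeas (ae_of_all _ fun s => ?_)
      rw [norm_mul]
      exact mul_le_mul_of_nonneg_right ((Real.norm_eq_abs _ ▸ hkbdd t s)) (norm_nonneg _)
    calc ‖g t‖ ≤ ∫ s, ‖k t s * u s‖ ∂μ := norm_integral_le_integral_norm _
      _ ≤ ∫ s, Ck * ‖u s‖ ∂μ := by
          refine integral_mono hi.norm (huint.norm.const_mul Ck) fun s => ?_
          rw [norm_mul]
          exact mul_le_mul_of_nonneg_right ((Real.norm_eq_abs _ ▸ hkbdd t s)) (norm_nonneg _)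
      _ = M := integral_const_mul Ck _
  -- MemLp g p
  have hgmem : MemLp g p μ := MemLp.of_bound hgsm.aestronglyMeasurable M (ae_of_all _ hgbdd)
  -- eLpNorm of u in L² bounded by R ‖f‖₂
  have hu2 : eLpNorm u 2 μ ≤ ENNReal.ofReal R * eLpNorm f 2 μ := by
    have := hbound u hu
    rwa [eLpNorm_congr_ae heq] at this
  -- ofReal M bound
  have hM1 : ENNReal.ofReal M = ENNReal.ofReal Ck * eLpNorm u 1 μ := by
    rw [hMdef, ENNReal.ofReal_mul hCk, ofReal_integral_norm_eq_lintegral_enorm huint,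
      eLpNorm_one_eq_lintegral_enorm]
  have h12 : eLpNorm u 1 μ ≤ eLpNorm u 2 μ * (ENNReal.ofReal x) ^ ((1:ℝ)/2) := by
    have := eLpNorm_le_eLpNorm_mul_rpow_measure_univ (μ := μ) (p := 1) (q := 2)
      one_le_two hu.1
    rw [hμuniv] at this
    convert this using 2
    norm_num
  -- main bound on eLpNorm g p
  set a : ℝ := p.toReal⁻¹ with hadef
  have ha0 : 0 ≤ a := by positivity
  have hxπ : ENNReal.ofReal x ≤ ENNReal.ofReal Real.pi := ENNReal.ofReal_le_ofReal hx.2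
  have hgkey : eLpNorm g p μ ≤
      ENNReal.ofReal (Real.pi ^ ((1 : ℝ) / 2 + 1 / p.toReal) * Ck * R) * eLpNorm f 2 μ := by
    have hrhs : ENNReal.ofReal (Real.pi ^ ((1 : ℝ) / 2 + 1 / p.toReal) * Ck * R) =
        (ENNReal.ofReal Real.pi) ^ ((1:ℝ)/2) * (ENNReal.ofReal Real.pi) ^ a *
          ENNReal.ofReal Ck * ENNReal.ofReal R := by
      have h1 : ENNReal.ofReal (Real.pi ^ ((1:ℝ)/2 + 1/p.toReal)) =
          (ENNReal.ofReal Real.pi) ^ ((1:ℝ)/2) * (ENNReal.ofReal Real.pi) ^ a := by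
        rw [← ENNReal.ofReal_rpow_of_pos Real.pi_pos, one_div p.toReal,
          ENNReal.rpow_add _ _ (by simp [Real.pi_pos]) ENNReal.ofReal_ne_top]
      rw [ENNReal.ofReal_mul (by positivity), ENNReal.ofReal_mul (by positivity), h1]
    calc eLpNorm g p μ ≤ μ Set.univ ^ p.toReal⁻¹ * ENNReal.ofReal M :=
          eLpNorm_le_of_ae_bound (ae_of_all _ hgbdd)
      _ = (ENNReal.ofReal x) ^ a * (ENNReal.ofReal Ck * eLpNorm u 1 μ) := by
          rw [hμuniv, hM1]
      _ ≤ (ENNReal.ofReal x) ^ a * (ENNReal.ofReal Ck *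
            ((ENNReal.ofReal R * eLpNorm f 2 μ) * (ENNReal.ofReal x) ^ ((1:ℝ)/2))) := by
          gcongr
          exact h12.trans (mul_le_mul_left hu2 _)
      _ = ((ENNReal.ofReal x) ^ ((1:ℝ)/2) * (ENNReal.ofReal x) ^ a *
            ENNReal.ofReal Ck * ENNReal.ofReal R) * eLpNorm f 2 μ := by ring
      _ ≤ ((ENNReal.ofReal Real.pi) ^ ((1:ℝ)/2) * (ENNReal.ofReal Real.pi) ^ a *
            ENNReal.ofReal Ck * ENNReal.ofReal R) * eLpNorm f 2 μ := by
          gcongr <;> exact hxπ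
      _ = ENNReal.ofReal (Real.pi ^ ((1 : ℝ) / 2 + 1 / p.toReal) * Ck * R) * eLpNorm f 2 μ := by
          rw [hrhs]
  -- u = f + g a.e.
  have hufg : u =ᵐ[μ] fun t => f t + g t := heq.mono fun t ht => by
    simp only [hgdef]; linarith [ht]
  have humem : MemLp u p μ := ((hf.add hgmem).ae_eq hufg.symm)
  refine ⟨humem, ?_⟩
  calc eLpNorm u p μ = eLpNorm (fun t => f t + g t) p μ := eLpNorm_congr_ae hufg
    _ ≤ eLpNorm f p μ + eLpNorm g p μ :=
        eLpNorm_add_le hf.1 hgsm.aestronglyMeasurable (le_trans one_le_two hp)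
    _ ≤ eLpNorm f p μ + ENNReal.ofReal (Real.pi ^ ((1 : ℝ) / 2 + 1 / p.toReal) * Ck * R) *
          eLpNorm f 2 μ := add_le_add_right hgkey _
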